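/- arXiv:2110.00715 — 3 statements merged into one kernel-verified Lean document; each statement's English description precedes it below -/
import Mathlib

section
/- If g : ℝ^n → ℝ^d is differentiable with L_g-Lipschitz Jacobian and sup_x ‖Dg(x)‖ ≤ M (operator norm), then for fixed ε > 0 the function φ(x) = √(‖g(x)‖² + ε²) − ε is differentiable and its gradient ∇φ(x) = Dg(x)ᵀ g(x)/√(‖g(x)‖² + ε²) is Lipschitz continuous with constant L_g + 2M²/ε. -/
open Real ContinuousLinearMap InnerProductSpace

lemma sqrt_aux_lip_stmt3 {a b c : ℝ} (hc : 0 ≤ c) :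
    |Real.sqrt (a ^ 2 + c) - Real.sqrt (b ^ 2 + c)| ≤ |a - b| := by
  have hA : Real.sqrt (a ^ 2 + c) ^ 2 = a ^ 2 + c := Real.sq_sqrt (by positivity)
  have hB : Real.sqrt (b ^ 2 + c) ^ 2 = b ^ 2 + c := Real.sq_sqrt (by positivity)
  have hA0 : 0 ≤ Real.sqrt (a ^ 2 + c) := Real.sqrt_nonneg _
  have hB0 : 0 ≤ Real.sqrt (b ^ 2 + c) := Real.sqrt_nonneg _
  have hab : a * b + c ≤ Real.sqrt (a ^ 2 + c) * Real.sqrt (b ^ 2 + c) := by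
    nlinarith [sq_nonneg (a - b), mul_nonneg hA0 hB0,
      sq_nonneg (Real.sqrt (a ^ 2 + c) * Real.sqrt (b ^ 2 + c) - a * b - c)]
  rw [← Real.sqrt_sq_eq_abs, ← Real.sqrt_sq_eq_abs (a - b)]
  exact Real.sqrt_le_sqrt (by nlinarith)

set_option maxHeartbeats 1000000 in
theorem stmt_3 (n d : ℕ) (g : EuclideanSpace ℝ (Fin n) → EuclideanSpace ℝ (Fin d))
    (L M ε : ℝ) (hε : 0 < ε)
    (hg : Differentiable ℝ g)
    (hL : ∀ x y, ‖fderiv ℝ g x - fderiv ℝ g y‖ ≤ L * ‖x - y‖)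
    (hM : ∀ x, ‖fderiv ℝ g x‖ ≤ M)
    (φ : EuclideanSpace ℝ (Fin n) → ℝ)
    (hφ : ∀ x, φ x = Real.sqrt (‖g x‖ ^ 2 + ε ^ 2) - ε) :
    Differentiable ℝ φ ∧
      (∀ x, gradient φ x =
        ContinuousLinearMap.adjoint (fderiv ℝ g x)
          ((Real.sqrt (‖g x‖ ^ 2 + ε ^ 2))⁻¹ • g x)) ∧
      (∀ x y, ‖gradient φ x - gradient φ y‖ ≤ (L + 2 * M ^ 2 / ε) * ‖x - y‖) := by
  have key : ∀ x, HasGradientAt φ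
      (ContinuousLinearMap.adjoint (fderiv ℝ g x)
        ((Real.sqrt (‖g x‖ ^ 2 + ε ^ 2))⁻¹ • g x)) x := by
    intro x
    have hA := (hg x).hasFDerivAt
    have h1 := (hA.inner ℝ hA).add_const (ε ^ 2)
    have hqpos : (0:ℝ) < ⟪g x, g x⟫_ℝ + ε ^ 2 := by
      have := real_inner_self_nonneg (x := g x); positivity
    have h3 := ((Real.hasDerivAt_sqrt hqpos.ne').comp_hasFDerivAt x h1).sub_const ε
    have hφeq : φ = fun y => Real.sqrt (⟪g y, g y⟫_ℝ + ε ^ 2) - ε := by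
      funext y; rw [hφ y, real_inner_self_eq_norm_sq]
    rw [hasGradientAt_iff_hasFDerivAt, hφeq]
    refine h3.congr_fderiv (Eq.symm ?_)
    have hs : Real.sqrt (‖g x‖ ^ 2 + ε ^ 2) ≠ 0 := by positivity
    ext w
    simp only [toDual_apply_apply, smul_apply, comp_apply, prod_apply, fderivInnerCLM_apply,
      adjoint_inner_left, real_inner_smul_left]
    rw [real_inner_comm ((fderiv ℝ g x) w) (g x), real_inner_self_eq_norm_sq]
    field_simp
    rw [smul_eq_mul]
    field_simp
    ring
  refine ⟨fun x => (key x).differentiableAt, fun x => (key x).gradient, ?_⟩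
  intro x y
  rw [(key x).gradient, (key y).gradient]
  set s : EuclideanSpace ℝ (Fin n) → ℝ := fun z => Real.sqrt (‖g z‖ ^ 2 + ε ^ 2) with hsdef
  have hspos : ∀ z, 0 < s z := fun z => Real.sqrt_pos.mpr (by positivity)
  have hsε : ∀ z, ε ≤ s z := fun z => by
    rw [show ε = Real.sqrt (ε ^ 2) from (Real.sqrt_sq hε.le).symm]
    exact Real.sqrt_le_sqrt (by nlinarith [sq_nonneg ‖g z‖])
  have hgs : ∀ z, ‖g z‖ ≤ s z := fun z => by
    rw [show ‖g z‖ = Real.sqrt (‖g z‖ ^ 2) from (Real.sqrt_sq (norm_nonneg _)).symm]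
    exact Real.sqrt_le_sqrt (by nlinarith)
  set v : EuclideanSpace ℝ (Fin n) → EuclideanSpace ℝ (Fin d) :=
    fun z => (s z)⁻¹ • g z with hvdef
  have hv1 : ∀ z, ‖v z‖ ≤ 1 := fun z => by
    rw [hvdef]; simp only [norm_smul, norm_inv, Real.norm_eq_abs, abs_of_pos (hspos z)]
    rw [inv_mul_le_iff₀ (hspos z), mul_one]; exact hgs z
  have hM0 : 0 ≤ M := le_trans (norm_nonneg _) (hM x)
  have hglip : ‖g x - g y‖ ≤ M * ‖x - y‖ := by
    have := convex_univ.norm_image_sub_le_of_norm_fderiv_le (f := g)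
      (fun z _ => hg z) (fun z _ => hM z)
      (Set.mem_univ y) (Set.mem_univ x)
    simpa using this
  have hslip : |s x - s y| ≤ ‖g x - g y‖ :=
    le_trans (sqrt_aux_lip_stmt3 (by positivity)) (abs_norm_sub_norm_le _ _)
  have hvsplit : v x - v y = (s x)⁻¹ • (g x - g y) + ((s x)⁻¹ - (s y)⁻¹) • g y := by
    rw [hvdef]; simp only [smul_sub, sub_smul]; abel
  have hterm2 : ‖((s x)⁻¹ - (s y)⁻¹) • g y‖ ≤ ‖g x - g y‖ / s x := by
    rw [norm_smul, Real.norm_eq_abs, inv_sub_inv (hspos x).ne' (hspos y).ne', abs_div,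
      abs_of_pos (mul_pos (hspos x) (hspos y)), abs_sub_comm]
    rw [div_mul_eq_mul_div, div_le_div_iff₀ (by positivity) (hspos x)]
    have h1 : |s x - s y| * ‖g y‖ ≤ ‖g x - g y‖ * s y :=
      mul_le_mul hslip (hgs y) (norm_nonneg _) (norm_nonneg _)
    nlinarith [hspos x, norm_nonneg (g y), abs_nonneg (s x - s y)]
  have hvlip : ‖v x - v y‖ ≤ 2 * (M * ‖x - y‖) / ε := by
    calc ‖v x - v y‖ ≤ ‖(s x)⁻¹ • (g x - g y)‖ + ‖((s x)⁻¹ - (s y)⁻¹) • g y‖ := by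
          rw [hvsplit]; exact norm_add_le _ _
      _ ≤ ‖g x - g y‖ / s x + ‖g x - g y‖ / s x := by
          refine add_le_add ?_ hterm2
          rw [norm_smul, Real.norm_eq_abs, abs_of_pos (by positivity), inv_mul_eq_div]
      _ = 2 * ‖g x - g y‖ / s x := by ring
      _ ≤ 2 * (M * ‖x - y‖) / ε := by
          apply div_le_div₀ (by positivity) (by linarith) hε (hsε x)
  set Ax := fderiv ℝ g x
  set Ay := fderiv ℝ g y
  have hsplit : ContinuousLinearMap.adjoint Ax (v x) - ContinuousLinearMap.adjoint Ay (v y)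
      = (ContinuousLinearMap.adjoint Ax - ContinuousLinearMap.adjoint Ay) (v x)
        + ContinuousLinearMap.adjoint Ay (v x - v y) := by
    simp only [ContinuousLinearMap.sub_apply, map_sub]; abel
  have hadjnorm : ‖ContinuousLinearMap.adjoint Ax - ContinuousLinearMap.adjoint Ay‖
      = ‖Ax - Ay‖ := by
    rw [← map_sub]
    exact (ContinuousLinearMap.adjoint : (_ →L[ℝ] _) ≃ₗᵢ⋆[ℝ] _).norm_map _
  have hadjM : ‖ContinuousLinearMap.adjoint Ay‖ = ‖Ay‖ :=
    (ContinuousLinearMap.adjoint : (_ →L[ℝ] _) ≃ₗᵢ⋆[ℝ] _).norm_map _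
  calc ‖ContinuousLinearMap.adjoint Ax (v x) - ContinuousLinearMap.adjoint Ay (v y)‖
      ≤ ‖(ContinuousLinearMap.adjoint Ax - ContinuousLinearMap.adjoint Ay) (v x)‖
        + ‖ContinuousLinearMap.adjoint Ay (v x - v y)‖ := by rw [hsplit]; exact norm_add_le _ _
    _ ≤ ‖Ax - Ay‖ * ‖v x‖ + ‖Ay‖ * ‖v x - v y‖ := by
        refine add_le_add ?_ ?_
        · exact le_trans (le_opNorm _ _) (by rw [hadjnorm])
        · exact le_trans (le_opNorm _ _) (by rw [hadjM])
    _ ≤ L * ‖x - y‖ + M * (2 * (M * ‖x - y‖) / ε) := by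
        refine add_le_add ?_ ?_
        · exact le_trans (mul_le_of_le_one_right (norm_nonneg _) (hv1 x)) (hL x y)
        · exact mul_le_mul (hM y) hvlip (norm_nonneg _) hM0
    _ = (L + 2 * M ^ 2 / ε) * ‖x - y‖ := by field_simp
end

section
/- Let g_1, …, g_m : ℝ^n → ℝ^d each be differentiable with L_g-Lipschitz Jacobian and with Jacobian operator norm bounded by M everywhere. Then the gradient of r_ε(x) = Σ_{j=1}^m (√(‖g_j(x)‖² + ε²) − ε) is Lipschitz continuous with constant m(L_g + 2M²/ε). -/
open Real

variable {E F : Type*} [NormedAddCommGroup E] [InnerProductSpace ℝ E]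
  [NormedAddCommGroup F] [InnerProductSpace ℝ F]

private lemma eps_le_s (ε : ℝ) (hε : 0 < ε) (a : F) :
    ε ≤ Real.sqrt (‖a‖ ^ 2 + ε ^ 2) := by
  have := Real.sqrt_le_sqrt (show ε ^ 2 ≤ ‖a‖ ^ 2 + ε ^ 2 by nlinarith [sq_nonneg ‖a‖])
  rwa [Real.sqrt_sq hε.le] at this

private lemma norm_le_s (ε : ℝ) (a : F) :
    ‖a‖ ≤ Real.sqrt (‖a‖ ^ 2 + ε ^ 2) := by
  have := Real.sqrt_le_sqrt (show ‖a‖ ^ 2 ≤ ‖a‖ ^ 2 + ε ^ 2 by nlinarith [sq_nonneg ε])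
  rwa [Real.sqrt_sq (norm_nonneg a)] at this

private lemma s_lip (ε : ℝ) (hε : 0 < ε) (a b : F) :
    Real.sqrt (‖a‖ ^ 2 + ε ^ 2) - Real.sqrt (‖b‖ ^ 2 + ε ^ 2) ≤ ‖a - b‖ := by
  have hb : 0 ≤ Real.sqrt (‖b‖ ^ 2 + ε ^ 2) := Real.sqrt_nonneg _
  have hsb : Real.sqrt (‖b‖ ^ 2 + ε ^ 2) ^ 2 = ‖b‖ ^ 2 + ε ^ 2 :=
    Real.sq_sqrt (by positivity)
  have hnb := norm_le_s ε b
  have hab : ‖a‖ ≤ ‖b‖ + ‖a - b‖ := by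
    have := norm_sub_norm_le a b; linarith
  have : Real.sqrt (‖a‖ ^ 2 + ε ^ 2) ≤ Real.sqrt (‖b‖ ^ 2 + ε ^ 2) + ‖a - b‖ := by
    rw [show Real.sqrt (‖b‖ ^ 2 + ε ^ 2) + ‖a - b‖
        = Real.sqrt ((Real.sqrt (‖b‖ ^ 2 + ε ^ 2) + ‖a - b‖) ^ 2) by
      rw [Real.sqrt_sq (by positivity)]]
    apply Real.sqrt_le_sqrt
    nlinarith [norm_nonneg (a - b), norm_nonneg a, norm_nonneg b]
  linarith

/-- Lipschitz property of `v ↦ v / sqrt (‖v‖² + ε²)`. -/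
private lemma u_lip (ε : ℝ) (hε : 0 < ε) (a b : F) :
    ‖(Real.sqrt (‖a‖ ^ 2 + ε ^ 2))⁻¹ • a - (Real.sqrt (‖b‖ ^ 2 + ε ^ 2))⁻¹ • b‖
      ≤ 2 / ε * ‖a - b‖ := by
  set sa := Real.sqrt (‖a‖ ^ 2 + ε ^ 2) with hsa
  set sb := Real.sqrt (‖b‖ ^ 2 + ε ^ 2) with hsb
  have hsa0 : 0 < sa := lt_of_lt_of_le hε (eps_le_s ε hε a)
  have hsb0 : 0 < sb := lt_of_lt_of_le hε (eps_le_s ε hε b)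
  have hεsa : ε ≤ sa := eps_le_s ε hε a
  have hεsb : ε ≤ sb := eps_le_s ε hε b
  have key : sa⁻¹ • a - sb⁻¹ • b = sa⁻¹ • (a - b) + (sa⁻¹ - sb⁻¹) • b := by
    rw [smul_sub, sub_smul]; abel
  rw [key]
  have h1 : ‖sa⁻¹ • (a - b)‖ ≤ ε⁻¹ * ‖a - b‖ := by
    rw [norm_smul, norm_inv, Real.norm_of_nonneg hsa0.le]
    exact mul_le_mul_of_nonneg_right (by
      exact inv_anti₀ hε hεsa) (norm_nonneg _)
  have h2 : ‖(sa⁻¹ - sb⁻¹) • b‖ ≤ ε⁻¹ * ‖a - b‖ := by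
    rw [norm_smul]
    have habs : |sa⁻¹ - sb⁻¹| = |sb - sa| / (sa * sb) := by
      rw [inv_sub_inv hsa0.ne' hsb0.ne', abs_div, abs_of_pos (mul_pos hsa0 hsb0)]
    rw [Real.norm_eq_abs, habs]
    have hdiff : |sb - sa| ≤ ‖a - b‖ := by
      rw [abs_sub_le_iff]
      constructor
      · have := s_lip ε hε b a
        rw [show ‖b - a‖ = ‖a - b‖ by rw [norm_sub_rev]] at this
        linarith
      · exact s_lip ε hε a b
    have hnb : ‖b‖ ≤ sb := norm_le_s ε b
    calc |sb - sa| / (sa * sb) * ‖b‖ ≤ ‖a - b‖ / (sa * sb) * sb := by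
          apply mul_le_mul (by
            apply div_le_div_of_nonneg_right hdiff <;> positivity <;> skip
            ) hnb (norm_nonneg _) (by positivity)
      _ = ‖a - b‖ / sa := by field_simp
      _ ≤ ε⁻¹ * ‖a - b‖ := by
          rw [div_eq_inv_mul]
          exact mul_le_mul_of_nonneg_right (inv_anti₀ hε hεsa) (norm_nonneg _)
  calc ‖sa⁻¹ • (a - b) + (sa⁻¹ - sb⁻¹) • b‖
      ≤ ‖sa⁻¹ • (a - b)‖ + ‖(sa⁻¹ - sb⁻¹) • b‖ := norm_add_le _ _
    _ ≤ ε⁻¹ * ‖a - b‖ + ε⁻¹ * ‖a - b‖ := add_le_add h1 h2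
    _ = 2 / ε * ‖a - b‖ := by ring

private lemma hasFDeriv_s {g : E → F} (hg : Differentiable ℝ g) (ε : ℝ) (hε : 0 < ε)
    (x : E) :
    HasFDerivAt (fun x => Real.sqrt (‖g x‖ ^ 2 + ε ^ 2) - ε)
      ((innerSL ℝ ((Real.sqrt (‖g x‖ ^ 2 + ε ^ 2))⁻¹ • g x)).comp (fderiv ℝ g x)) x := by
  have hq : HasFDerivAt (fun x => ‖g x‖ ^ 2 + ε ^ 2)
      (2 • (innerSL ℝ (g x)).comp (fderiv ℝ g x)) x :=
    ((hg x).hasFDerivAt.norm_sq).add_const _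
  have hpos : (0 : ℝ) < ‖g x‖ ^ 2 + ε ^ 2 := by positivity
  have hsq := (Real.hasDerivAt_sqrt hpos.ne').comp_hasFDerivAt x hq
  have := hsq.sub_const ε
  refine HasFDerivAt.congr_fderiv this ?_
  ext v
  have hs0 : 0 < Real.sqrt (‖g x‖ ^ 2 + ε ^ 2) := Real.sqrt_pos.mpr hpos
  simp [real_inner_smul_left]
  field_simp

theorem stmt_4 (n d m : ℕ)
    (g : Fin m → EuclideanSpace ℝ (Fin n) → EuclideanSpace ℝ (Fin d))
    (L M ε : ℝ) (hε : 0 < ε)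
    (hg : ∀ j, Differentiable ℝ (g j))
    (hL : ∀ j, ∀ x y, ‖fderiv ℝ (g j) x - fderiv ℝ (g j) y‖ ≤ L * ‖x - y‖)
    (hM : ∀ j x, ‖fderiv ℝ (g j) x‖ ≤ M)
    (r : EuclideanSpace ℝ (Fin n) → ℝ)
    (hr : ∀ x, r x = ∑ j, (Real.sqrt (‖g j x‖ ^ 2 + ε ^ 2) - ε)) :
    ∀ x y, ‖gradient r x - gradient r y‖ ≤ m * (L + 2 * M ^ 2 / ε) * ‖x - y‖ := by
  intro x y
  have hfd : ∀ z, HasFDerivAt r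
      (∑ j, (innerSL ℝ ((Real.sqrt (‖g j z‖ ^ 2 + ε ^ 2))⁻¹ • g j z)).comp
        (fderiv ℝ (g j) z)) z := by
    intro z
    have : HasFDerivAt (fun z => ∑ j, (Real.sqrt (‖g j z‖ ^ 2 + ε ^ 2) - ε))
        (∑ j, (innerSL ℝ ((Real.sqrt (‖g j z‖ ^ 2 + ε ^ 2))⁻¹ • g j z)).comp
          (fderiv ℝ (g j) z)) z :=
      HasFDerivAt.fun_sum (fun j _ => hasFDeriv_s (hg j) ε hε z)
    have hre : r = fun z => ∑ j, (Real.sqrt (‖g j z‖ ^ 2 + ε ^ 2) - ε) := funext hr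
    rw [hre]
    exact this
  have hgrad : ∀ z, gradient r z = (InnerProductSpace.toDual ℝ _).symm
      (∑ j, (innerSL ℝ ((Real.sqrt (‖g j z‖ ^ 2 + ε ^ 2))⁻¹ • g j z)).comp
        (fderiv ℝ (g j) z)) := by
    intro z
    rw [gradient, (hfd z).fderiv]
  rw [hgrad x, hgrad y, ← map_sub, LinearIsometryEquiv.norm_map]
  -- trivial cases
  rcases Nat.eq_zero_or_pos m with hm | hm
  · subst hm
    simp
  rcases eq_or_ne x y with hxy | hxy
  · subst hxy; simp
  have hxy0 : 0 < ‖x - y‖ := by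
    rw [norm_pos_iff, sub_ne_zero]; exact hxy
  obtain ⟨j0⟩ : Nonempty (Fin m) := ⟨⟨0, hm⟩⟩
  have hM0 : 0 ≤ M := le_trans (norm_nonneg _) (hM j0 0)
  have hL0 : 0 ≤ L := by
    have := hL j0 x y
    have h0 := (norm_nonneg (fderiv ℝ (g j0) x - fderiv ℝ (g j0) y)).trans this
    by_contra h
    push_neg at h
    nlinarith
  -- per-term bound
  have key : ∀ j : Fin m,
      ‖(innerSL ℝ ((Real.sqrt (‖g j x‖ ^ 2 + ε ^ 2))⁻¹ • g j x)).comp (fderiv ℝ (g j) x)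
        - (innerSL ℝ ((Real.sqrt (‖g j y‖ ^ 2 + ε ^ 2))⁻¹ • g j y)).comp (fderiv ℝ (g j) y)‖
        ≤ (L + 2 * M ^ 2 / ε) * ‖x - y‖ := by
    intro j
    set ux := (Real.sqrt (‖g j x‖ ^ 2 + ε ^ 2))⁻¹ • g j x with hux
    set uy := (Real.sqrt (‖g j y‖ ^ 2 + ε ^ 2))⁻¹ • g j y with huy
    set A := fderiv ℝ (g j) x
    set B := fderiv ℝ (g j) y
    have hdecomp : (innerSL ℝ ux).comp A - (innerSL ℝ uy).comp B
        = (innerSL ℝ ux).comp (A - B) + (innerSL ℝ (ux - uy)).comp B := by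
      ext v
      simp [inner_sub_left, inner_sub_right]
    have hux1 : ‖ux‖ ≤ 1 := by
      rw [hux, norm_smul, norm_inv, Real.norm_of_nonneg (Real.sqrt_nonneg _)]
      have h1 : 0 < Real.sqrt (‖g j x‖ ^ 2 + ε ^ 2) :=
        lt_of_lt_of_le hε (eps_le_s ε hε (g j x))
      rw [inv_mul_le_iff₀ h1, mul_one]
      exact norm_le_s ε (g j x)
    have hgl : ‖g j x - g j y‖ ≤ M * ‖x - y‖ := by
      have := Convex.norm_image_sub_le_of_norm_fderiv_le
        (f := g j) (C := M) (s := Set.univ)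
        (fun z _ => (hg j z)) (fun z _ => hM j z) convex_univ
        (Set.mem_univ y) (Set.mem_univ x)
      simpa using this
    have huxy : ‖ux - uy‖ ≤ 2 / ε * (M * ‖x - y‖) := by
      calc ‖ux - uy‖ ≤ 2 / ε * ‖g j x - g j y‖ := u_lip ε hε _ _
        _ ≤ 2 / ε * (M * ‖x - y‖) := by
            apply mul_le_mul_of_nonneg_left hgl (by positivity)
    calc ‖(innerSL ℝ ux).comp A - (innerSL ℝ uy).comp B‖
        = ‖(innerSL ℝ ux).comp (A - B) + (innerSL ℝ (ux - uy)).comp B‖ := by rw [hdecomp]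
      _ ≤ ‖(innerSL ℝ ux).comp (A - B)‖ + ‖(innerSL ℝ (ux - uy)).comp B‖ := norm_add_le _ _
      _ ≤ ‖innerSL ℝ ux‖ * ‖A - B‖ + ‖innerSL ℝ (ux - uy)‖ * ‖B‖ :=
          add_le_add (ContinuousLinearMap.opNorm_comp_le _ _)
            (ContinuousLinearMap.opNorm_comp_le _ _)
      _ = ‖ux‖ * ‖A - B‖ + ‖ux - uy‖ * ‖B‖ := by rw [innerSL_apply_norm, innerSL_apply_norm]
      _ ≤ 1 * (L * ‖x - y‖) + (2 / ε * (M * ‖x - y‖)) * M := by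
          apply add_le_add
          · exact mul_le_mul hux1 (hL j x y) (norm_nonneg _) zero_le_one
          · exact mul_le_mul huxy (hM j y) (norm_nonneg _) (by positivity)
      _ = (L + 2 * M ^ 2 / ε) * ‖x - y‖ := by field_simp
  -- sum up
  rw [← Finset.sum_sub_distrib]
  calc ‖∑ j, ((innerSL ℝ ((Real.sqrt (‖g j x‖ ^ 2 + ε ^ 2))⁻¹ • g j x)).comp (fderiv ℝ (g j) x)
        - (innerSL ℝ ((Real.sqrt (‖g j y‖ ^ 2 + ε ^ 2))⁻¹ • g j y)).comp (fderiv ℝ (g j) y))‖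
      ≤ ∑ j : Fin m, (L + 2 * M ^ 2 / ε) * ‖x - y‖ :=
        norm_sum_le_of_le _ (fun j _ => key j)
    _ = m * (L + 2 * M ^ 2 / ε) * ‖x - y‖ := by
        rw [Finset.sum_const, Finset.card_fin]; simp [mul_assoc]
end

section
/- Let f : ℝ^n → ℝ be continuously differentiable, g : ℝ^n → ℝ^d continuously differentiable, and φ(x) = f(x) + ‖g(x)‖ (Euclidean norm). Suppose x_p → x̂ with ‖g(x̂)‖ > 0, ε_p → 0⁺, and ∇φ_{ε_p}(x_p) → 0, where φ_ε(x) = f(x) + √(‖g(x)‖² + ε²) − ε. Then ∇f(x̂) + Dg(x̂)ᵀ g(x̂)/‖g(x̂)‖ = 0, i.e., x̂ is a stationary point of φ. -/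
theorem stmt_14 (n d : ℕ) (f : EuclideanSpace ℝ (Fin n) → ℝ)
    (g : EuclideanSpace ℝ (Fin n) → EuclideanSpace ℝ (Fin d))
    (hf : ContDiff ℝ 1 f) (hg : ContDiff ℝ 1 g)
    (φ : ℝ → EuclideanSpace ℝ (Fin n) → ℝ)
    (hφ : ∀ ε x, φ ε x = f x + (Real.sqrt (‖g x‖ ^ 2 + ε ^ 2) - ε))
    (xp : ℕ → EuclideanSpace ℝ (Fin n)) (εp : ℕ → ℝ) (hεpos : ∀ p, 0 < εp p)
    (xhat : EuclideanSpace ℝ (Fin n))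
    (hx : Filter.Tendsto xp Filter.atTop (nhds xhat))
    (hε : Filter.Tendsto εp Filter.atTop (nhds 0))
    (hgrad : Filter.Tendsto (fun p => gradient (φ (εp p)) (xp p)) Filter.atTop (nhds 0))
    (hgx : ‖g xhat‖ ≠ 0) :
    gradient f xhat + ContinuousLinearMap.adjoint (fderiv ℝ g xhat) (‖g xhat‖⁻¹ • g xhat) = 0 := by
  classical
  -- formula for the gradient of φ ε at any point, for ε ≠ 0
  have key : ∀ ε : ℝ, ε ≠ 0 → ∀ x, gradient (φ ε) x =
      gradient f x + (Real.sqrt (‖g x‖ ^ 2 + ε ^ 2))⁻¹ •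
        (ContinuousLinearMap.adjoint (fderiv ℝ g x)) (g x) := by
    intro ε hε0 x
    set s : ℝ := ‖g x‖ ^ 2 + ε ^ 2 with hs_def
    have hspos : 0 < s := by positivity
    have hsne : s ≠ 0 := ne_of_gt hspos
    have hsqrt_pos : 0 < Real.sqrt s := Real.sqrt_pos.mpr hspos
    have hsqrt_ne : Real.sqrt s ≠ 0 := ne_of_gt hsqrt_pos
    have hgd : HasFDerivAt g (fderiv ℝ g x) x :=
      ((hg.differentiable one_ne_zero) x).hasFDerivAt
    have hsq : HasFDerivAt (fun y => ‖g y‖ ^ 2)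
        (2 • (innerSL ℝ (g x)).comp (fderiv ℝ g x)) x := hgd.norm_sq
    have hsum : HasFDerivAt (fun y => ‖g y‖ ^ 2 + ε ^ 2)
        (2 • (innerSL ℝ (g x)).comp (fderiv ℝ g x)) x := hsq.add_const _
    have hsqrtd : HasFDerivAt (fun y => Real.sqrt (‖g y‖ ^ 2 + ε ^ 2))
        ((1 / (2 * Real.sqrt s)) • (2 • (innerSL ℝ (g x)).comp (fderiv ℝ g x))) x :=
      (Real.hasDerivAt_sqrt hsne).comp_hasFDerivAt x hsum
    have hsub : HasFDerivAt (fun y => Real.sqrt (‖g y‖ ^ 2 + ε ^ 2) - ε)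
        ((1 / (2 * Real.sqrt s)) • (2 • (innerSL ℝ (g x)).comp (fderiv ℝ g x))) x :=
      hsqrtd.sub_const _
    have hfd : HasFDerivAt f (fderiv ℝ f x) x :=
      ((hf.differentiable one_ne_zero) x).hasFDerivAt
    have hφd : HasFDerivAt (φ ε)
        (fderiv ℝ f x + (1 / (2 * Real.sqrt s)) •
          (2 • (innerSL ℝ (g x)).comp (fderiv ℝ g x))) x := by
      have := hfd.add hsub
      rw [show φ ε = fun y => f y + (Real.sqrt (‖g y‖ ^ 2 + ε ^ 2) - ε) from funext (hφ ε)]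
      exact this
    have hGrad : HasGradientAt (φ ε)
        (gradient f x + (Real.sqrt s)⁻¹ •
          (ContinuousLinearMap.adjoint (fderiv ℝ g x)) (g x)) x := by
      rw [hasGradientAt_iff_hasFDerivAt]
      refine hφd.congr_fderiv ?_
      symm
      ext w
      have hgradf : ((InnerProductSpace.toDual ℝ (EuclideanSpace ℝ (Fin n))) (gradient f x)) w
          = fderiv ℝ f x w := by
        simp only [gradient, InnerProductSpace.toDual_apply_apply]
        rw [← InnerProductSpace.toDual_apply_apply, LinearIsometryEquiv.apply_symm_apply]
      simp only [InnerProductSpace.toDual_apply_apply, inner_add_left, inner_smul_left,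
        ContinuousLinearMap.add_apply, ContinuousLinearMap.smul_apply,
        ContinuousLinearMap.coe_smul', Pi.smul_apply, ContinuousLinearMap.comp_apply,
        innerSL_apply_apply, smul_eq_mul, ContinuousLinearMap.adjoint_inner_left]
      rw [← InnerProductSpace.toDual_apply_apply, hgradf]
      have : (starRingEnd ℝ) (Real.sqrt s)⁻¹ = (Real.sqrt s)⁻¹ := rfl
      rw [this]
      ring
    exact hGrad.gradient
  -- the sequence of gradients equals the formula sequence
  have hform : ∀ p, gradient (φ (εp p)) (xp p) =
      gradient f (xp p) + (Real.sqrt (‖g (xp p)‖ ^ 2 + (εp p) ^ 2))⁻¹ •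
        (ContinuousLinearMap.adjoint (fderiv ℝ g (xp p))) (g (xp p)) :=
    fun p => key (εp p) (ne_of_gt (hεpos p)) (xp p)
  -- continuity facts
  have hgc : Continuous g := hg.continuous
  have hfderivg : Continuous (fun x => fderiv ℝ g x) := hg.continuous_fderiv one_ne_zero
  have hgradf_cont : Continuous (fun x => gradient f x) := by
    have : (fun x => gradient f x) =
        (fun L => (InnerProductSpace.toDual ℝ (EuclideanSpace ℝ (Fin n))).symm L) ∘
          (fun x => fderiv ℝ f x) := rfl
    rw [this]
    exact (InnerProductSpace.toDual ℝ _).symm.continuous.comp (hf.continuous_fderiv one_ne_zero)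
  have hadj_cont : Continuous (fun x =>
      (ContinuousLinearMap.adjoint (fderiv ℝ g x)) (g x)) := by
    apply Continuous.clm_apply _ hgc
    exact (ContinuousLinearMap.adjoint :
      (EuclideanSpace ℝ (Fin n) →L[ℝ] EuclideanSpace ℝ (Fin d)) ≃ₗᵢ⋆[ℝ] _).continuous.comp
      hfderivg
  -- limit of the coefficient
  have hcoef : Filter.Tendsto (fun p => (Real.sqrt (‖g (xp p)‖ ^ 2 + (εp p) ^ 2))⁻¹)
      Filter.atTop (nhds (‖g xhat‖⁻¹)) := by
    have h1 : Filter.Tendsto (fun p => ‖g (xp p)‖ ^ 2 + (εp p) ^ 2)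
        Filter.atTop (nhds (‖g xhat‖ ^ 2 + 0 ^ 2)) := by
      apply Filter.Tendsto.add
      · exact ((continuous_norm.comp hgc).pow 2).continuousAt.tendsto.comp hx
      · exact (hε.pow 2)
    have h2 : Filter.Tendsto (fun p => Real.sqrt (‖g (xp p)‖ ^ 2 + (εp p) ^ 2))
        Filter.atTop (nhds (‖g xhat‖)) := by
      have := (Real.continuous_sqrt.continuousAt.tendsto.comp h1)
      simpa [Real.sqrt_sq (norm_nonneg _), Function.comp_def] using this
    exact h2.inv₀ hgx
  -- limit of the formula sequence
  have hlim : Filter.Tendsto (fun p => gradient (φ (εp p)) (xp p)) Filter.atTop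
      (nhds (gradient f xhat + ‖g xhat‖⁻¹ •
        (ContinuousLinearMap.adjoint (fderiv ℝ g xhat)) (g xhat))) := by
    simp only [hform]
    apply Filter.Tendsto.add
    · exact hgradf_cont.continuousAt.tendsto.comp hx
    · exact hcoef.smul (hadj_cont.continuousAt.tendsto.comp hx)
  have heq : gradient f xhat + ‖g xhat‖⁻¹ •
      (ContinuousLinearMap.adjoint (fderiv ℝ g xhat)) (g xhat) = 0 :=
    tendsto_nhds_unique hlim hgrad
  rw [map_smul]
  exact heq
end
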